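/- Let F be a real Hilbert space, U, V ⊆ F nonempty open convex sets, and Φ, Ψ : F → ℝ Fréchet differentiable with Ψ strictly convex on V. Suppose ∇Φ : U → V is a bijection with inverse ∇Ψ restricted to V, and that the Fenchel–Young equality Φ(f) + Ψ(∇Φ(f)) = ⟨f, ∇Φ(f)⟩ holds for all f ∈ U. Let X be an F-valued random element with X ∈ U almost surely such that Z = ∇Φ(X) is Bochner integrable with Bochner mean z̄ = E[Z] ∈ V, Ψ(Z) is integrable, and E[d_Ψ(Z, v)] is finite for all v ∈ V. Then g ↦ E[d_Φ(g, X)] admits the unique minimiser over U given by the quasi-arithmetic mean g* = ∇Ψ(z̄) = (∇Φ)⁻¹(E[∇Φ(X)]). -/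

import Mathlib

open scoped RealInnerProductSpace
open MeasureTheory

/-- The functional Bregman divergence `d_Φ(f,g) = Φ(f) − Φ(g) − ⟪∇Φ(g), f − g⟫`. -/
noncomputable def bregmanDiv {F : Type*} [NormedAddCommGroup F] [InnerProductSpace ℝ F]
    (Φ : F → ℝ) (Φ' : F → F) (f g : F) : ℝ :=
  Φ f - Φ g - ⟪Φ' g, f - g⟫

/-- Gradient inequality for a strictly convex differentiable function:
`⟪∇Ψ(g), f − g⟫ < Ψ(f) − Ψ(g)` for `f ≠ g` in a convex set. -/
lemma strictConvexOn_gradient_lt {F : Type*} [NormedAddCommGroup F] [InnerProductSpace ℝ F]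
    [CompleteSpace F] {V : Set F} {Ψ : F → ℝ} {Ψ' : F → F}
    (hΨ : ∀ y ∈ V, HasGradientAt Ψ (Ψ' y) y) (hΨconv : StrictConvexOn ℝ V Ψ)
    {f g : F} (hf : f ∈ V) (hg : g ∈ V) (hfg : f ≠ g) :
    ⟪Ψ' g, f - g⟫ < Ψ f - Ψ g := by
  set L : ℝ →ᵃ[ℝ] F := AffineMap.lineMap g f with hL
  have hLinj : Function.Injective L := AffineMap.lineMap_injective ℝ (Ne.symm hfg)
  set S : Set ℝ := L ⁻¹' V with hS
  have hSconv : Convex ℝ S := hΨconv.1.affine_preimage L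
  -- strict convexity of `Ψ ∘ L` on `S`
  have hφ : StrictConvexOn ℝ S (fun t => Ψ (L t)) := by
    refine ⟨hSconv, fun x hx y hy hxy a b ha hb hab => ?_⟩
    have := hΨconv.2 hx hy (fun h => hxy (hLinj h)) ha hb hab
    simpa only [Convex.combo_affine_apply hab] using this
  have h0 : (0 : ℝ) ∈ S := by
    simp only [hS, Set.mem_preimage, hL, AffineMap.lineMap_apply_zero]; exact hg
  have h1 : (1 : ℝ) ∈ S := by
    simp only [hS, Set.mem_preimage, hL, AffineMap.lineMap_apply_one]; exact hf
  -- derivative of `Ψ ∘ L` at 0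
  have hd : HasDerivAt (fun t => Ψ (L t)) ⟪Ψ' g, f - g⟫ 0 := by
    have hline : HasDerivAt (fun t : ℝ => L t) (f - g) 0 := by
      simp only [hL, AffineMap.lineMap_apply, vadd_eq_add]
      simpa using ((hasDerivAt_id (0 : ℝ)).smul_const (f - g)).add_const g
    have hgrad := (hΨ g hg).hasFDerivAt
    have hL0 : L 0 = g := by simp [hL]
    rw [← hL0] at hgrad
    have := hgrad.comp_hasDerivAt 0 hline
    simp [InnerProductSpace.toDual_apply_apply, hL0] at this; exact this
  have := hφ.lt_slope_of_hasDerivAt h0 h1 one_pos hd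
  simp only [slope_def_field] at this
  simp only [hL, AffineMap.lineMap_apply_one, AffineMap.lineMap_apply_zero] at this
  calc ⟪Ψ' g, f - g⟫ < (Ψ f - Ψ g) / (1 - 0) := by simpa [div_eq_inv_mul] using this
    _ = Ψ f - Ψ g := by norm_num

/-- Quasi-arithmetic mean as the left minimiser of expected Bregman risk. Let `Φ` be a
Legendre-type generator on a nonempty open convex set `U` of a real Hilbert space, with
convex conjugate `Ψ` Fréchet differentiable and strictly convex on a nonempty open convex
set `V`, gradient maps `Φ' : U → V` and `Ψ' : V → U` mutually inverse bijections, and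
Fenchel–Young equality `Φ(f) + Ψ(∇Φ(f)) = ⟪f, ∇Φ(f)⟫` on `U`. Let `X ∈ U` a.s. with
`Z = ∇Φ(X)` Bochner integrable, `z̄ = E[Z] ∈ V`, `Ψ(Z)` integrable, and `E[d_Ψ(Z,v)]`
finite for all `v ∈ V`. Then `g* = ∇Ψ(z̄) = (∇Φ)⁻¹(E[∇Φ(X)])` is the unique minimiser
over `U` of `g ↦ E[d_Φ(g, X)]`. -/
theorem bregman_quasi_arithmetic_mean_minimiser
    {F : Type*} [NormedAddCommGroup F] [InnerProductSpace ℝ F] [CompleteSpace F]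
    {Ω : Type*} [MeasurableSpace Ω] (P : Measure Ω) [IsProbabilityMeasure P]
    (U V : Set F)
    (hU : IsOpen U) (hUconv : Convex ℝ U) (hUne : U.Nonempty)
    (hV : IsOpen V) (hVconv : Convex ℝ V) (hVne : V.Nonempty)
    (Φ Ψ : F → ℝ) (Φ' Ψ' : F → F)
    (hΦ : ∀ x ∈ U, HasGradientAt Φ (Φ' x) x)
    (hΨ : ∀ y ∈ V, HasGradientAt Ψ (Ψ' y) y)
    (hΨconv : StrictConvexOn ℝ V Ψ)
    (hmapΦ : Set.MapsTo Φ' U V) (hmapΨ : Set.MapsTo Ψ' V U)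
    (hinv₁ : ∀ x ∈ U, Ψ' (Φ' x) = x) (hinv₂ : ∀ y ∈ V, Φ' (Ψ' y) = y)
    (hFY : ∀ x ∈ U, Φ x + Ψ (Φ' x) = ⟪x, Φ' x⟫)
    (X : Ω → F)
    (hXU : ∀ᵐ ω ∂P, X ω ∈ U)
    (hZint : Integrable (fun ω => Φ' (X ω)) P)
    (zbar : F) (hzbar : zbar = ∫ ω, Φ' (X ω) ∂P) (hzbarV : zbar ∈ V)
    (hΨZ : Integrable (fun ω => Ψ (Φ' (X ω))) P)
    (hint : ∀ v ∈ V, Integrable (fun ω => bregmanDiv Ψ Ψ' (Φ' (X ω)) v) P) :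
    Ψ' zbar ∈ U ∧
      (∀ g ∈ U, ∫ ω, bregmanDiv Φ Φ' (Ψ' zbar) (X ω) ∂P
          ≤ ∫ ω, bregmanDiv Φ Φ' g (X ω) ∂P) ∧
      ∀ g ∈ U, g ≠ Ψ' zbar →
        ∫ ω, bregmanDiv Φ Φ' (Ψ' zbar) (X ω) ∂P
          < ∫ ω, bregmanDiv Φ Φ' g (X ω) ∂P := by
  have hgstar : Ψ' zbar ∈ U := hmapΨ hzbarV
  -- the expected risk as a function of g
  have key : ∀ g ∈ U, ∫ ω, bregmanDiv Φ Φ' g (X ω) ∂P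
      = Φ g - ⟪zbar, g⟫ + ∫ ω, Ψ (Φ' (X ω)) ∂P := by
    intro g hg
    have hptwise : ∀ᵐ ω ∂P, bregmanDiv Φ Φ' g (X ω)
        = Φ g + Ψ (Φ' (X ω)) - ⟪Φ' (X ω), g⟫ := by
      filter_upwards [hXU] with ω hω
      have hfy := hFY (X ω) hω
      have hsym : ⟪X ω, Φ' (X ω)⟫ = ⟪Φ' (X ω), X ω⟫ := real_inner_comm _ _
      simp only [bregmanDiv, inner_sub_right]
      linarith [hfy, hsym]
    rw [integral_congr_ae hptwise]
    have hinner : Integrable (fun ω => ⟪Φ' (X ω), g⟫) P := hZint.inner_const g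
    have hInt1 : Integrable (fun ω => Φ g + Ψ (Φ' (X ω))) P := (integrable_const (Φ g)).add hΨZ
    rw [integral_sub hInt1 hinner, integral_add (integrable_const (Φ g)) hΨZ, integral_const]
    have : ∫ ω, ⟪Φ' (X ω), g⟫ ∂P = ⟪zbar, g⟫ := by
      rw [hzbar]
      calc ∫ ω, ⟪Φ' (X ω), g⟫ ∂P
          = ∫ ω, ⟪g, Φ' (X ω)⟫ ∂P :=
            integral_congr_ae (Filter.Eventually.of_forall fun ω => real_inner_comm _ _)
        _ = ⟪g, ∫ ω, Φ' (X ω) ∂P⟫ := integral_inner hZint g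
        _ = ⟪∫ ω, Φ' (X ω) ∂P, g⟫ := real_inner_comm _ _
    rw [this]
    simp [measure_univ]
    ring
  -- value at the candidate minimiser
  have hgrad_star : Φ' (Ψ' zbar) = zbar := hinv₂ zbar hzbarV
  -- difference of risks equals a Bregman divergence of Ψ
  have diff : ∀ g ∈ U,
      (∫ ω, bregmanDiv Φ Φ' g (X ω) ∂P) - (∫ ω, bregmanDiv Φ Φ' (Ψ' zbar) (X ω) ∂P)
      = bregmanDiv Ψ Ψ' zbar (Φ' g) := by
    intro g hg
    rw [key g hg, key (Ψ' zbar) hgstar]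
    have hfyg := hFY g hg
    have hfystar := hFY (Ψ' zbar) hgstar
    rw [hgrad_star] at hfystar
    have hgy : Ψ' (Φ' g) = g := hinv₁ g hg
    simp only [bregmanDiv, hgy, inner_sub_right]
    have h1 : ⟪g, Φ' g⟫ = ⟪Φ' g, g⟫ := real_inner_comm _ _
    have h2 : ⟪Ψ' zbar, zbar⟫ = ⟪zbar, Ψ' zbar⟫ := real_inner_comm _ _
    have h3 : ⟪g, zbar⟫ = ⟪zbar, g⟫ := real_inner_comm _ _
    linarith [hfyg, hfystar]
  refine ⟨hgstar, fun g hg => ?_, fun g hg hne => ?_⟩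
  · have hd := diff g hg
    by_cases hy : Φ' g = zbar
    · have h0 : bregmanDiv Ψ Ψ' zbar (Φ' g) = 0 := by simp [bregmanDiv, hy]
      rw [h0] at hd; linarith
    · have := strictConvexOn_gradient_lt hΨ hΨconv hzbarV (hmapΦ hg) (Ne.symm hy)
      have hpos : 0 < bregmanDiv Ψ Ψ' zbar (Φ' g) := by
        simp only [bregmanDiv]; linarith
      linarith
  · have hd := diff g hg
    have hy : Φ' g ≠ zbar := by
      intro h
      apply hne
      rw [← hinv₁ g hg, h]
    have := strictConvexOn_gradient_lt hΨ hΨconv hzbarV (hmapΦ hg) (Ne.symm hy)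
    have hpos : 0 < bregmanDiv Ψ Ψ' zbar (Φ' g) := by
      simp only [bregmanDiv]; linarith
    linarith
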